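/- Let ξ̄ : ℝ → ℝ be Lipschitz continuous, nondecreasing, bounded from below, and convex. Then for every μ ∈ C, the infimum defining 𝖧(μ) is attained at μ itself: inf{ ∫₀¹ ξ̄( ν(s) ) ds : ν ∈ C, ν − μ ∈ C* } = ∫₀¹ ξ̄( μ(s) ) ds. -/

import Mathlib

open MeasureTheory

/-- Lebesgue measure restricted to `[0,1)`. -/
noncomputable def mu0 : Measure ℝ := volume.restrict (Set.Ico (0 : ℝ) 1)

/-- The Hilbert space `H = L²([0,1))`. -/
noncomputable abbrev Hsp : Type := Lp ℝ 2 mu0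

/-- The cone `C ⊂ H` of (classes of) functions with a nondecreasing nonnegative
representative on `[0,1)`. -/
def coneC : Set Hsp :=
  {f | ∃ g : ℝ → ℝ, MonotoneOn g (Set.Ico 0 1) ∧ (∀ x ∈ Set.Ico (0 : ℝ) 1, 0 ≤ g x) ∧
    (f : ℝ → ℝ) =ᵐ[mu0] g}

/-- The dual cone `C*` of `C` in `H`. -/
noncomputable def dualC : Set Hsp := {ι | ∀ ρ ∈ coneC, 0 ≤ inner (𝕜 := ℝ) ι ρ}

/-- The regularized nonlinearity `𝖧(ι) = inf { ∫₀¹ ξ̄(ν(s)) ds : ν ∈ C, ν - ι ∈ C* }`,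
valued in `ℝ ∪ {+∞}` (the infimum of the empty set being `+∞`). -/
noncomputable def HH (ξb : ℝ → ℝ) (ι : Hsp) : EReal :=
  sInf {x : EReal | ∃ ν ∈ coneC, ν - ι ∈ dualC ∧ x = ((∫ s, ξb (ν s) ∂mu0 : ℝ) : EReal)}

instance : IsFiniteMeasure mu0 := by
  constructor
  rw [mu0, Measure.restrict_apply_univ]
  simp [Real.volume_Ico]

lemma mu0_univ : (mu0 Set.univ).toReal = 1 := by
  rw [mu0, Measure.restrict_apply_univ]; simp [Real.volume_Ico]

section aux
variable {ξb : ℝ → ℝ} {K : NNReal} {t : ℝ}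

lemma phi_nonneg (hmono : Monotone ξb) (ht : 0 < t) (a : ℝ) :
    0 ≤ (ξb (a + t) - ξb a) / t :=
  div_nonneg (by linarith [hmono (by linarith : a ≤ a + t)]) ht.le

lemma phi_le_K (hK : LipschitzWith K ξb) (ht : 0 < t) (a : ℝ) :
    (ξb (a + t) - ξb a) / t ≤ K := by
  have h := hK.dist_le_mul (a + t) a
  rw [Real.dist_eq, Real.dist_eq] at h
  have h2 : ξb (a + t) - ξb a ≤ K * t := by
    calc ξb (a + t) - ξb a ≤ |ξb (a + t) - ξb a| := le_abs_self _
    _ ≤ K * |a + t - a| := h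
    _ = K * t := by rw [show a + t - a = t by ring, abs_of_pos ht]
  rw [div_le_iff₀ ht]; linarith

lemma phi_mono (hconv : ConvexOn ℝ Set.univ ξb) (ht : 0 < t) :
    Monotone (fun a => (ξb (a + t) - ξb a) / t) := by
  intro a a' haa'
  rcases eq_or_lt_of_le haa' with rfl | h
  · exact le_rfl
  simp only
  have h1 : (ξb (a + t) - ξb a) / t ≤ (ξb (a' + t) - ξb a) / (a' + t - a) := by
    have := hconv.secant_mono (Set.mem_univ a) (Set.mem_univ (a + t))
      (Set.mem_univ (a' + t)) (by intro hc; linarith) (by intro hc; linarith)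
      (by linarith)
    simpa [show a + t - a = t by ring] using this
  have h2 : (ξb a - ξb (a' + t)) / (a - (a' + t)) ≤ (ξb a' - ξb (a' + t)) / (a' - (a' + t)) :=
    hconv.secant_mono (Set.mem_univ (a' + t)) (Set.mem_univ a) (Set.mem_univ a')
      (by intro hc; linarith) (by intro hc; linarith) haa'
  have e1 : (ξb a - ξb (a' + t)) / (a - (a' + t)) = (ξb (a' + t) - ξb a) / (a' + t - a) := by
    rw [← neg_div_neg_eq]; ring_nf
  have e2 : (ξb a' - ξb (a' + t)) / (a' - (a' + t)) = (ξb (a' + t) - ξb a') / t := by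
    rw [← neg_div_neg_eq]; ring_nf
  rw [e1, e2] at h2
  linarith

lemma phi_key (hconv : ConvexOn ℝ Set.univ ξb) (hmono : Monotone ξb)
    (hK : LipschitzWith K ξb) (ht : 0 < t) (a b : ℝ) :
    (ξb (a + t) - ξb a) / t * (b - a) - K * t ≤ ξb b - ξb a := by
  have hKt : (0:ℝ) ≤ K * t := mul_nonneg K.2 ht.le
  have hφ0 := phi_nonneg hmono ht a
  have hφK := phi_le_K hK ht a
  rcases le_or_gt b a with hba | hab
  · rcases eq_or_lt_of_le hba with rfl | hba
    · nlinarith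
    have := hconv.secant_mono (Set.mem_univ a) (Set.mem_univ b) (Set.mem_univ (a + t))
      (by intro hc; linarith) (by intro hc; linarith) (by linarith)
    rw [show a + t - a = t by ring] at this
    have hba' : b - a < 0 := by linarith
    have := (div_le_iff_of_neg hba').mp this
    nlinarith
  · rcases le_or_gt b (a + t) with hbt | hbt
    · have h0 : 0 ≤ ξb b - ξb a := by linarith [hmono hab.le]
      nlinarith
    · have := hconv.secant_mono (Set.mem_univ a) (Set.mem_univ (a + t)) (Set.mem_univ b)
        (by intro hc; linarith) (by intro hc; linarith) (by linarith)
      rw [show a + t - a = t by ring] at this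
      have hba' : 0 < b - a := by linarith
      have h2 := (le_div_iff₀ hba').mp this
      nlinarith

lemma integrable_comp (ξb : ℝ → ℝ) {K : NNReal} (hK : LipschitzWith K ξb) (f : Hsp) :
    Integrable (fun s => ξb (f s)) mu0 := by
  have h1 : LipschitzWith K (fun x => ξb x - ξb 0) := by
    intro x y
    simpa [edist_sub_right] using hK x y
  have h2 : MemLp (fun s => ξb (f s) - ξb 0) 2 mu0 :=
    h1.comp_memLp (by simp) (Lp.memLp f)
  have h3 : MemLp (fun s => ξb (f s)) 2 mu0 := by
    have := h2.add (memLp_const (ξb 0))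
    convert this using 1
    funext s; simp
  exact h3.integrable (by norm_num)

lemma integrable_coe (f : Hsp) : Integrable (fun s => f s) mu0 :=
  (Lp.memLp f).integrable (by norm_num)

end aux

lemma main_ineq (ξb : ℝ → ℝ) {K : NNReal} (hK : LipschitzWith K ξb)
    (hmono : Monotone ξb) (hconv : ConvexOn ℝ Set.univ ξb)
    (μ ν : Hsp) (hμ : μ ∈ coneC) (hd : ν - μ ∈ dualC) :
    (∫ s, ξb (μ s) ∂mu0) ≤ ∫ s, ξb (ν s) ∂mu0 := by
  obtain ⟨g, hgmono, hgnn, hgae⟩ := hμ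
  have key : ∀ t : ℝ, 0 < t →
      (∫ s, ξb (μ s) ∂mu0) ≤ (∫ s, ξb (ν s) ∂mu0) + K * t := by
    intro t ht
    set φ : ℝ → ℝ := fun a => (ξb (a + t) - ξb a) / t with hφ
    have hφc : Continuous φ := by
      have := hK.continuous
      fun_prop
    have hφ0 : ∀ a, 0 ≤ φ a := phi_nonneg hmono ht
    have hφK : ∀ a, φ a ≤ K := phi_le_K hK ht
    have hρm : MemLp (fun s => φ (μ s)) 2 mu0 := by
      refine MemLp.of_bound (hφc.comp_aestronglyMeasurable (Lp.aestronglyMeasurable μ)) K ?_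
      filter_upwards with x
      rw [Real.norm_eq_abs, abs_le]
      exact ⟨by linarith [hφ0 (μ x), K.coe_nonneg], hφK (μ x)⟩
    set ρ : Hsp := hρm.toLp _ with hρ
    have hρC : ρ ∈ coneC := by
      refine ⟨φ ∘ g, fun x hx y hy hxy => phi_mono hconv ht (hgmono hx hy hxy),
        fun x _ => hφ0 _, ?_⟩
      filter_upwards [hρm.coeFn_toLp, hgae] with x h1 h2
      show (MemLp.toLp (fun s => φ (μ s)) hρm : ℝ → ℝ) x = (φ ∘ g) x
      rw [h1, Function.comp_apply, h2]
    have hinner : 0 ≤ inner (𝕜 := ℝ) (ν - μ) ρ := hd ρ hρC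
    have hinner_eq : inner (𝕜 := ℝ) (ν - μ) ρ
        = ∫ s, (ν s - μ s) * φ (μ s) ∂mu0 := by
      rw [L2.inner_def]
      refine integral_congr_ae ?_
      filter_upwards [Lp.coeFn_sub ν μ, hρm.coeFn_toLp] with x h1 h2
      have h2' : (ρ : ℝ → ℝ) x = φ (μ x) := h2
      rw [RCLike.inner_apply, h1, h2']
      simp [mul_comm]
    have hint1 : Integrable (fun s => (ν s - μ s) * φ (μ s)) mu0 := by
      have : Integrable (fun s => ν s - μ s) mu0 :=
        (integrable_coe ν).sub (integrable_coe μ)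
      have h := this.bdd_mul
        (f := fun s => φ (μ s))
        (hφc.comp_aestronglyMeasurable (Lp.aestronglyMeasurable μ))
        (c := K) (Filter.Eventually.of_forall fun x => by
          rw [Real.norm_eq_abs, abs_le]
          exact ⟨by linarith [hφ0 (μ x), K.coe_nonneg], hφK (μ x)⟩)
      simpa [mul_comm] using h
    have hmain : (∫ s, ξb (ν s) ∂mu0) - (∫ s, ξb (μ s) ∂mu0)
        ≥ (∫ s, (ν s - μ s) * φ (μ s) ∂mu0) - K * t := by
      have h1 : ∀ s, φ (μ s) * (ν s - μ s) - K * t ≤ ξb (ν s) - ξb (μ s) :=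
        fun s => phi_key hconv hmono hK ht (μ s) (ν s)
      have h2 : (∫ s, ((ν s - μ s) * φ (μ s) - K * t) ∂mu0)
          ≤ ∫ s, (ξb (ν s) - ξb (μ s)) ∂mu0 := by
        refine integral_mono (hint1.sub (integrable_const _))
          ((integrable_comp ξb hK ν).sub (integrable_comp ξb hK μ)) ?_
        intro s
        simpa [mul_comm] using h1 s
      rw [integral_sub hint1 (integrable_const _),
        integral_sub (integrable_comp ξb hK ν) (integrable_comp ξb hK μ),
        integral_const, smul_eq_mul, measureReal_def, mu0_univ, one_mul] at h2
      linarith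
    linarith [hinner_eq ▸ hinner]
  refine le_of_forall_pos_le_add fun ε hε => ?_
  have hKpos : (0:ℝ) < K + 1 := by positivity
  have ht : 0 < ε / (K + 1) := by positivity
  have hle : (K:ℝ) * (ε / (K + 1)) ≤ ε := by
    rw [mul_div_assoc', div_le_iff₀ hKpos]
    nlinarith [K.2, hε.le]
  linarith [key _ ht]

theorem stmt10 (ξb : ℝ → ℝ) (hlip : ∃ K : NNReal, LipschitzWith K ξb)
    (hmono : Monotone ξb) (hbdd : ∃ c : ℝ, ∀ r : ℝ, c ≤ ξb r)
    (hconv : ConvexOn ℝ Set.univ ξb)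
    (μ : Hsp) (hμ : μ ∈ coneC) :
    HH ξb μ = ((∫ s, ξb (μ s) ∂mu0 : ℝ) : EReal) := by
  obtain ⟨K, hK⟩ := hlip
  refine le_antisymm ?_ ?_
  · refine sInf_le ?_
    refine ⟨μ, hμ, ?_, rfl⟩
    rw [sub_self]
    intro ρ _
    simp
  · refine le_sInf ?_
    rintro x ⟨ν, hν, hd, rfl⟩
    exact_mod_cast main_ineq ξb hK hmono hconv μ ν hμ hd
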